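/- Let A be a finite-dimensional selfinjective algebra, I an ideal, e a residual identity of B = A/I with IeI = 0 and l_A(I) = Ie. Then eIe equals both the left annihilator of I in eAe and the right annihilator of I in eAe, i.e. l_{eAe}(I) = eIe = r_{eAe}(I). -/

import Mathlib

open MulOpposite

noncomputable section Stmt15Aux

namespace Stmt15

def Indec (R M : Type) [Ring R] [AddCommGroup M] [Module R M] : Prop :=
  (⊥ : Submodule R M) ≠ ⊤ ∧ ∀ U V : Submodule R M, IsCompl U V → U = ⊥ ∨ V = ⊥

section General

variable {R : Type} [Ring R]
variable {M N : Type} [AddCommGroup M] [Module R M] [AddCommGroup N] [Module R N]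

lemma injective_of_equiv (h : Module.Injective R M) (e : M ≃ₗ[R] N) :
    Module.Injective R N := by
  constructor
  intro X Y _ _ _ _ f hf g
  obtain ⟨h', hh'⟩ := h.out f hf (e.symm.toLinearMap ∘ₗ g)
  refine ⟨e.toLinearMap ∘ₗ h', fun x => ?_⟩
  simp only [LinearMap.comp_apply, hh' x, LinearEquiv.coe_coe, LinearEquiv.apply_symm_apply]

lemma dichotomy' [IsArtinian R M] [IsNoetherian R M]
    (hM : ∀ U V : Submodule R M, IsCompl U V → U = ⊥ ∨ V = ⊥) (f : Module.End R M) :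
    Function.Bijective f ∨ ∃ n : ℕ, f ^ n = 0 := by
  obtain ⟨n, hn⟩ := Filter.eventually_atTop.mp (LinearMap.eventually_isCompl_ker_pow_range_pow f)
  have hc := hn (n + 1) (Nat.le_succ n)
  rcases hM _ _ hc with h | h
  · left
    have hinj : Function.Injective f := by
      rw [← LinearMap.ker_eq_bot]
      refine le_bot_iff.mp (h ▸ ?_)
      intro x hx
      have hx' : f x = 0 := hx
      have : (f ^ (n + 1)) x = (f ^ n) (f x) := by rw [pow_succ]; rfl
      simp only [LinearMap.mem_ker, this, hx', map_zero]
    exact IsArtinian.bijective_of_injective_endomorphism f hinj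
  · exact Or.inr ⟨n + 1, LinearMap.range_eq_bot.mp h⟩

lemma unique_atom [IsArtinian R M] [IsNoetherian R M] (hinj : Module.Injective R M)
    (hM : Indec R M) :
    ∃ T : Submodule R M, T ≠ ⊥ ∧ ∀ N' : Submodule R M, N' ≠ ⊥ → T ≤ N' := by
  haveI : IsAtomic (Submodule R M) := isAtomic_of_orderBot_wellFounded_lt IsWellFounded.wf
  obtain ⟨T, hT⟩ : ∃ T : Submodule R M, IsAtom T := by
    rcases eq_bot_or_exists_atom_le (⊤ : Submodule R M) with h | ⟨a, ha, _⟩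
    · exact absurd h.symm hM.1
    · exact ⟨a, ha⟩
  refine ⟨T, hT.1, fun N' hN' => ?_⟩
  rcases eq_bot_or_exists_atom_le N' with h | ⟨T₂, hT₂, hT₂N⟩
  · exact absurd h hN'
  suffices hTT : T = T₂ by exact hTT ▸ hT₂N
  by_contra hne
  have hdis : T ⊓ T₂ = ⊥ := by
    rcases hT.le_iff.mp (inf_le_left : T ⊓ T₂ ≤ T) with h | h
    · exact h
    · exfalso
      have hle : T ≤ T₂ := h ▸ inf_le_right
      rcases hT₂.le_iff.mp hle with h2 | h2
      · exact hT.1 h2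
      · exact hne h2
  set W : Submodule R M := T ⊔ T₂ with hWdef
  set p' : Submodule R ↥W := Submodule.comap W.subtype T with hp'def
  set q' : Submodule R ↥W := Submodule.comap W.subtype T₂ with hq'def
  have hcompl' : IsCompl p' q' := by
    constructor
    · rw [disjoint_iff]
      ext x
      simp only [Submodule.mem_inf, Submodule.mem_comap, Submodule.mem_bot, Submodule.coe_subtype]
      constructor
      · rintro ⟨h1, h2⟩
        have hm : (x : M) ∈ T ⊓ T₂ := ⟨h1, h2⟩
        rw [hdis, Submodule.mem_bot] at hm
        exact Subtype.ext hm
      · rintro rfl; simp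
    · rw [codisjoint_iff, eq_top_iff]
      rintro ⟨x, hx⟩ -
      rcases Submodule.mem_sup.mp hx with ⟨a, ha, b, hb, hab⟩
      have haW : a ∈ W := (le_sup_left : T ≤ W) ha
      have hbW : b ∈ W := (le_sup_right : T₂ ≤ W) hb
      refine Submodule.mem_sup.mpr ⟨⟨a, haW⟩, ha, ⟨b, hbW⟩, hb, ?_⟩
      exact Subtype.ext hab
  set φW : ↥W →ₗ[R] M := LinearMap.ofIsCompl hcompl' (W.subtype ∘ₗ p'.subtype) 0 with hφWdef
  haveI := hinj
  obtain ⟨F, hF⟩ := Module.Injective.extension_property R M ↥W M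
    W.subtype (Submodule.injective_subtype W) φW
  have hFW : ∀ w : ↥W, F (w : M) = φW w := fun w => LinearMap.congr_fun hF w
  have hFT : ∀ x ∈ T, F x = x := by
    intro x hx
    have hxW : x ∈ W := (le_sup_left : T ≤ W) hx
    have h1 : F x = φW ⟨x, hxW⟩ := hFW ⟨x, hxW⟩
    rw [h1]
    have hmem : (⟨x, hxW⟩ : ↥W) ∈ p' := hx
    have h2 := LinearMap.ofIsCompl_left_apply hcompl'
      (φ := W.subtype ∘ₗ p'.subtype) (ψ := (0 : ↥q' →ₗ[R] M)) (⟨⟨x, hxW⟩, hmem⟩ : ↥p')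
    simpa [hφWdef] using h2
  have hFT₂ : ∀ x ∈ T₂, F x = 0 := by
    intro x hx
    have hxW : x ∈ W := (le_sup_right : T₂ ≤ W) hx
    have h1 : F x = φW ⟨x, hxW⟩ := hFW ⟨x, hxW⟩
    rw [h1]
    have hmem : (⟨x, hxW⟩ : ↥W) ∈ q' := hx
    have h2 := LinearMap.ofIsCompl_right_apply hcompl'
      (φ := W.subtype ∘ₗ p'.subtype) (ψ := (0 : ↥q' →ₗ[R] M)) (⟨⟨x, hxW⟩, hmem⟩ : ↥q')
    simpa [hφWdef] using h2
  rcases dichotomy' hM.2 F with hbij | ⟨n, hn⟩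
  · obtain ⟨x₂, hx₂, h0⟩ := Submodule.ne_bot_iff T₂ |>.mp hT₂.1
    apply h0
    apply hbij.1
    rw [hFT₂ x₂ hx₂, map_zero]
  · obtain ⟨x₁, hx₁, h0⟩ := Submodule.ne_bot_iff T |>.mp hT.1
    apply h0
    have hpow : ∀ k : ℕ, (F ^ k) x₁ = x₁ := by
      intro k
      induction k with
      | zero => rfl
      | succ k ih => rw [pow_succ, Module.End.mul_apply, hFT x₁ hx₁, ih]
    have := hpow n
    rw [hn] at this
    simpa using this.symm

lemma nilpotent_one_sub_bijective (f : Module.End R M) {n : ℕ} (hf : f ^ n = 0) :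
    Function.Bijective (1 - f : Module.End R M) := by
  set w : Module.End R M := ∑ i ∈ Finset.range n, f ^ i with hw
  have h1 : (1 - f) * w = 1 := by
    rw [← neg_sub f 1, neg_mul, hw, mul_geom_sum f n, hf, zero_sub, neg_neg]
  have h2 : w * (1 - f) = 1 := by
    rw [← neg_sub f 1, mul_neg, hw, geom_sum_mul f n, hf, zero_sub, neg_neg]
  refine Function.bijective_iff_has_inverse.mpr ⟨w, fun x => ?_, fun x => ?_⟩
  · have := LinearMap.congr_fun h2 x
    simpa [Module.End.mul_apply] using this
  · have := LinearMap.congr_fun h1 x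
    simpa [Module.End.mul_apply] using this

lemma unique_coatom [IsArtinian R M] [IsNoetherian R M] (hproj : Module.Projective R M)
    (hM : Indec R M) :
    ∃ C : Submodule R M, C ≠ ⊤ ∧ ∀ N' : Submodule R M, N' ≠ ⊤ → N' ≤ C := by
  haveI := hproj
  haveI : IsCoatomic (Submodule R M) := isCoatomic_of_orderTop_gt_wellFounded IsWellFounded.wf
  obtain ⟨C, hC, -⟩ : ∃ C : Submodule R M, IsCoatom C ∧ (⊥ : Submodule R M) ≤ C := by
    rcases eq_top_or_exists_le_coatom (⊥ : Submodule R M) with h | ⟨C, hC, hle⟩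
    · exact absurd h hM.1
    · exact ⟨C, hC, hle⟩
  refine ⟨C, hC.1, fun N' hN' => ?_⟩
  obtain ⟨C₂, hC₂, hle⟩ := (eq_top_or_exists_le_coatom N').resolve_left hN'
  suffices hCC : C₂ = C by exact hCC ▸ hle
  by_contra hne
  have hsup : C₂ ⊔ C = ⊤ := by
    by_cases hCle : C ≤ C₂
    · exfalso
      rcases eq_or_lt_of_le hCle with h | h
      · exact hne h.symm
      · exact hC₂.1 (hC.2 _ h)
    · have hlt : C₂ < C₂ ⊔ C := lt_of_le_of_ne le_sup_left
        (fun h => hCle (h ▸ le_sup_right))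
      exact hC₂.2 _ hlt
  have hs : Function.Surjective ((C₂.mkQ).comp C.subtype) := by
    intro z
    obtain ⟨x, rfl⟩ := Submodule.mkQ_surjective C₂ z
    have hx : x ∈ C₂ ⊔ C := hsup ▸ Submodule.mem_top
    rcases Submodule.mem_sup.mp hx with ⟨a, ha, b, hb, rfl⟩
    refine ⟨⟨b, hb⟩, ?_⟩
    simp only [LinearMap.comp_apply, Submodule.coe_subtype, Submodule.mkQ_apply]
    rw [Submodule.Quotient.eq]
    simpa using ha
  obtain ⟨β, hβ⟩ := Module.projective_lifting_property ((C₂.mkQ).comp C.subtype) C₂.mkQ hs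
  set β' : M →ₗ[R] M := C.subtype ∘ₗ β with hβ'def
  have hran : LinearMap.range β' ≤ C := by
    rintro x ⟨y, rfl⟩
    exact (β y).2
  have hmkQ : ∀ x : M, C₂.mkQ (β' x) = C₂.mkQ x := by
    intro x
    have := LinearMap.congr_fun hβ x
    simpa [hβ'def] using this
  rcases dichotomy' hM.2 β' with hbij | ⟨n, hn⟩
  · apply hC.1
    rw [eq_top_iff]
    intro x _
    obtain ⟨y, rfl⟩ := hbij.2 x
    exact hran (LinearMap.mem_range_self β' y)
  · have hbij1 := nilpotent_one_sub_bijective β' hn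
    apply hC₂.1
    rw [eq_top_iff]
    intro x _
    obtain ⟨y, hy⟩ := hbij1.2 x
    have h1 : x = y - β' y := by
      rw [← hy]; rfl
    have h2 : C₂.mkQ x = 0 := by
      rw [h1, map_sub, hmkQ y, sub_self]
    exact (Submodule.Quotient.mk_eq_zero C₂).mp h2

lemma iso_of_atom_iso [IsArtinian R M] [IsNoetherian R M] [IsArtinian R N] [IsNoetherian R N]
    (hMinj : Module.Injective R M) (hNinj : Module.Injective R N)
    (hM : Indec R M) (hN : Indec R N)
    {TM : Submodule R M} {TN : Submodule R N}
    (hTM : TM ≠ ⊥ ∧ ∀ N' : Submodule R M, N' ≠ ⊥ → TM ≤ N')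
    (hTN : TN ≠ ⊥ ∧ ∀ N' : Submodule R N, N' ≠ ⊥ → TN ≤ N')
    (e : ↥TM ≃ₗ[R] ↥TN) : Nonempty (M ≃ₗ[R] N) := by
  haveI := hNinj
  obtain ⟨φ, hφ⟩ := Module.Injective.extension_property R N ↥TM M
    TM.subtype (Submodule.injective_subtype TM) (TN.subtype ∘ₗ e.toLinearMap)
  have hφT : ∀ x : ↥TM, φ (x : M) = ((e x : ↥TN) : N) := by
    intro x
    have := LinearMap.congr_fun hφ x
    simpa using this
  have hker : LinearMap.ker φ = ⊥ := by
    by_contra hk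
    obtain ⟨x, hx, h0⟩ := Submodule.ne_bot_iff TM |>.mp hTM.1
    apply h0
    have hle := hTM.2 _ hk
    have h1 : φ x = 0 := hle hx
    have h2 : ((e ⟨x, hx⟩ : ↥TN) : N) = 0 := by rw [← hφT ⟨x, hx⟩]; exact h1
    have h3 : e ⟨x, hx⟩ = 0 := Subtype.ext h2
    have h4 : (⟨x, hx⟩ : ↥TM) = 0 := by
      apply e.injective; rw [h3, map_zero]
    exact congrArg Subtype.val h4
  have hinjφ : Function.Injective φ := LinearMap.ker_eq_bot.mp hker
  set Y := LinearMap.range φ with hY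
  have eY : M ≃ₗ[R] ↥Y := LinearEquiv.ofInjective φ hinjφ
  have hYinj := injective_of_equiv hMinj eY
  haveI := hYinj
  obtain ⟨r, hr⟩ := Module.Injective.extension_property R ↥Y ↥Y N
    Y.subtype (Submodule.injective_subtype Y) LinearMap.id
  have hrY : ∀ y : ↥Y, r (y : N) = y := by
    intro y
    have := LinearMap.congr_fun hr y
    simpa using this
  have hcompl : IsCompl Y (LinearMap.ker r) := by
    constructor
    · rw [disjoint_iff]
      ext x
      simp only [Submodule.mem_inf, Submodule.mem_bot, LinearMap.mem_ker]
      constructor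
      · rintro ⟨hxY, hxk⟩
        have h5 := hrY ⟨x, hxY⟩
        rw [show ((⟨x, hxY⟩ : ↥Y) : N) = x from rfl, hxk] at h5
        exact (congrArg Subtype.val h5).symm
      · rintro rfl; exact ⟨Y.zero_mem, map_zero r⟩
    · rw [codisjoint_iff, eq_top_iff]
      intro x _
      refine Submodule.mem_sup.mpr ⟨((r x : ↥Y) : N), (r x).2, x - ((r x : ↥Y) : N), ?_, by abel⟩
      have h6 : r ((r x : ↥Y) : N) = r x := hrY (r x)
      simp only [LinearMap.mem_ker, map_sub, h6, sub_self]
  rcases hN.2 _ _ hcompl with h | h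
  · exfalso
    obtain ⟨x, hx, h0⟩ := Submodule.ne_bot_iff TM |>.mp hTM.1
    have h7 : φ x ∈ Y := LinearMap.mem_range_self φ x
    rw [h, Submodule.mem_bot] at h7
    exact h0 (hinjφ (by rw [h7, map_zero]))
  · have hYtop : Y = ⊤ := by
      have h8 := hcompl.codisjoint
      rw [h] at h8
      exact codisjoint_bot.mp h8
    exact ⟨LinearEquiv.ofBijective φ ⟨hinjφ, LinearMap.range_eq_top.mp (hY ▸ hYtop)⟩⟩

lemma iso_of_top_iso (hMproj : Module.Projective R M) (hNproj : Module.Projective R N)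
    (hM : Indec R M) (hN : Indec R N)
    {CM : Submodule R M} {CN : Submodule R N}
    (hCM : CM ≠ ⊤ ∧ ∀ N' : Submodule R M, N' ≠ ⊤ → N' ≤ CM)
    (hCN : CN ≠ ⊤ ∧ ∀ N' : Submodule R N, N' ≠ ⊤ → N' ≤ CN)
    (e : (M ⧸ CM) ≃ₗ[R] (N ⧸ CN)) : Nonempty (M ≃ₗ[R] N) := by
  haveI := hMproj
  haveI := hNproj
  set φ0 : M →ₗ[R] N ⧸ CN := e.toLinearMap ∘ₗ CM.mkQ with hφ0def
  have hφ0 : Function.Surjective φ0 := e.surjective.comp (Submodule.mkQ_surjective CM)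
  obtain ⟨β, hβ⟩ := Module.projective_lifting_property CN.mkQ φ0 (Submodule.mkQ_surjective CN)
  have hβ' : ∀ x : M, CN.mkQ (β x) = φ0 x := fun x => LinearMap.congr_fun hβ x
  have hβsurj : Function.Surjective β := by
    by_contra hns
    have hr : LinearMap.range β ≠ ⊤ := fun h => hns (LinearMap.range_eq_top.mp h)
    have hle := hCN.2 _ hr
    obtain ⟨z, hz⟩ : ∃ z : N, z ∉ CN := by
      by_contra hall
      push_neg at hall
      exact hCN.1 (Submodule.eq_top_iff'.mpr hall)
    obtain ⟨m, hm⟩ := hφ0 (CN.mkQ z)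
    have h1 : CN.mkQ (β m) = CN.mkQ z := by rw [hβ' m, hm]
    have h2 : β m ∈ CN := hle (LinearMap.mem_range_self β m)
    have h3 : CN.mkQ (β m) = 0 := (Submodule.Quotient.mk_eq_zero CN).mpr h2
    rw [h3] at h1
    exact hz ((Submodule.Quotient.mk_eq_zero CN).mp h1.symm)
  obtain ⟨σ, hσ⟩ := Module.projective_lifting_property β LinearMap.id hβsurj
  have hβσ : ∀ y : N, β (σ y) = y := fun y => LinearMap.congr_fun hσ y
  have hcompl : IsCompl (LinearMap.ker β) (LinearMap.range σ) := by
    constructor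
    · rw [disjoint_iff]
      ext x
      simp only [Submodule.mem_inf, LinearMap.mem_ker, LinearMap.mem_range, Submodule.mem_bot]
      constructor
      · rintro ⟨hk, y, rfl⟩
        rw [hβσ y] at hk
        rw [hk, map_zero]
      · rintro rfl
        exact ⟨map_zero β, 0, map_zero σ⟩
    · rw [codisjoint_iff, eq_top_iff]
      intro x _
      refine Submodule.mem_sup.mpr ⟨x - σ (β x), ?_, σ (β x), ⟨β x, rfl⟩, by abel⟩
      simp only [LinearMap.mem_ker, map_sub, hβσ (β x), sub_self]
  rcases hM.2 _ _ hcompl with h | h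
  · exact ⟨LinearEquiv.ofBijective β ⟨LinearMap.ker_eq_bot.mp h, hβsurj⟩⟩
  · exfalso
    have hσ0 : σ = 0 := LinearMap.range_eq_bot.mp h
    apply hN.1
    rw [eq_top_iff]
    intro y _
    have h1 : y = 0 := by
      have h2 := hβσ y
      rw [hσ0] at h2
      simpa using h2.symm
    rw [h1]
    exact Submodule.zero_mem ⊥

lemma top_iso {S : Type} [AddCommGroup S] [Module R S] (hS : IsSimpleModule R S)
    {C : Submodule R M} (hC : C ≠ ⊤ ∧ ∀ N' : Submodule R M, N' ≠ ⊤ → N' ≤ C)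
    (φ : M →ₗ[R] S) (hφ : φ ≠ 0) : Nonempty ((M ⧸ C) ≃ₗ[R] S) := by
  have hrange : LinearMap.range φ = ⊤ := by
    rcases hS.1.eq_bot_or_eq_top (LinearMap.range φ) with h | h
    · exact absurd (LinearMap.range_eq_bot.mp h) hφ
    · exact h
  have hsurj : Function.Surjective φ := LinearMap.range_eq_top.mp hrange
  have hker_ne : LinearMap.ker φ ≠ ⊤ := by
    intro h
    apply hφ
    ext x
    have : x ∈ LinearMap.ker φ := h ▸ Submodule.mem_top
    simpa using this
  have e1 : (M ⧸ LinearMap.ker φ) ≃ₗ[R] S := φ.quotKerEquivOfSurjective hsurj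
  haveI : IsSimpleModule R (M ⧸ LinearMap.ker φ) := IsSimpleModule.congr e1
  have hco : IsCoatom (LinearMap.ker φ) := (isSimpleModule_iff_isCoatom).mp ‹_›
  have hker : LinearMap.ker φ = C := by
    rcases eq_or_lt_of_le (hC.2 _ hker_ne) with h | h
    · exact h
    · exact absurd (hco.2 _ h) hC.1
  exact ⟨(Submodule.quotEquivOfEq C (LinearMap.ker φ) hker.symm).trans e1⟩

lemma map_equiv_eq {p : Submodule R N} (h : M ≃ₗ[R] N) :
    Submodule.map (h : M →ₗ[R] N) (Submodule.map (h.symm : N →ₗ[R] M) p) = p := by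
  ext x
  simp only [Submodule.mem_map]
  constructor
  · rintro ⟨y, ⟨z, hz, rfl⟩, rfl⟩
    simpa using hz
  · intro hx
    exact ⟨h.symm x, ⟨x, hx, rfl⟩, by simp⟩


lemma map_ne_bot {M' N' : Type} [AddCommGroup M'] [Module R M'] [AddCommGroup N'] [Module R N']
    (f : M' →ₗ[R] N') (hf : Function.Injective f) {p : Submodule R M'} (hp : p ≠ ⊥) :
    Submodule.map f p ≠ ⊥ := by
  intro hmap
  apply hp
  ext x
  simp only [Submodule.mem_bot]
  constructor
  · intro hx
    have h1 : f x ∈ Submodule.map f p := ⟨x, hx, rfl⟩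
    rw [hmap, Submodule.mem_bot] at h1
    have h2 : f x = f 0 := by simpa using h1
    exact hf h2
  · rintro rfl; exact p.zero_mem

lemma map_ne_top {M' N' : Type} [AddCommGroup M'] [Module R M'] [AddCommGroup N'] [Module R N']
    (h : M' ≃ₗ[R] N') {p : Submodule R M'} (hp : p ≠ ⊤) :
    Submodule.map (h : M' →ₗ[R] N') p ≠ ⊤ := by
  intro hmap
  apply hp
  ext x
  simp only [Submodule.mem_top, iff_true]
  have h1 : h x ∈ Submodule.map (h : M' →ₗ[R] N') p := hmap ▸ Submodule.mem_top
  obtain ⟨y, hy, hyx⟩ := h1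
  have h2 : y = x := h.injective hyx
  exact h2 ▸ hy

lemma atom_map (h : M ≃ₗ[R] N) {TM : Submodule R M} {TN : Submodule R N}
    (hTM : TM ≠ ⊥ ∧ ∀ N' : Submodule R M, N' ≠ ⊥ → TM ≤ N')
    (hTN : TN ≠ ⊥ ∧ ∀ N' : Submodule R N, N' ≠ ⊥ → TN ≤ N') :
    Nonempty (↥TM ≃ₗ[R] ↥TN) := by
  have h1 : TN ≤ Submodule.map (h : M →ₗ[R] N) TM :=
    hTN.2 _ (map_ne_bot (h : M →ₗ[R] N) h.injective hTM.1)
  have h2 : TM ≤ Submodule.map (h.symm : N →ₗ[R] M) TN :=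
    hTM.2 _ (map_ne_bot (h.symm : N →ₗ[R] M) h.symm.injective hTN.1)
  have h3 : Submodule.map (h : M →ₗ[R] N) TM ≤ TN := by
    calc Submodule.map (h : M →ₗ[R] N) TM
        ≤ Submodule.map (h : M →ₗ[R] N) (Submodule.map (h.symm : N →ₗ[R] M) TN) :=
          Submodule.map_mono h2
      _ = TN := map_equiv_eq h
  have heq : Submodule.map (h : M →ₗ[R] N) TM = TN := le_antisymm h3 h1
  exact ⟨(Submodule.equivMapOfInjective (h : M →ₗ[R] N) h.injective TM).trans
    (LinearEquiv.ofEq _ _ heq)⟩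

lemma top_map (h : M ≃ₗ[R] N) {CM : Submodule R M} {CN : Submodule R N}
    (hCM : CM ≠ ⊤ ∧ ∀ N' : Submodule R M, N' ≠ ⊤ → N' ≤ CM)
    (hCN : CN ≠ ⊤ ∧ ∀ N' : Submodule R N, N' ≠ ⊤ → N' ≤ CN) :
    Nonempty ((M ⧸ CM) ≃ₗ[R] (N ⧸ CN)) := by
  have h1 : Submodule.map (h : M →ₗ[R] N) CM ≤ CN := hCN.2 _ (map_ne_top h hCM.1)
  have h2 : Submodule.map (h.symm : N →ₗ[R] M) CN ≤ CM := hCM.2 _ (map_ne_top h.symm hCN.1)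
  have h3 : CN ≤ Submodule.map (h : M →ₗ[R] N) CM := by
    calc CN = Submodule.map (h : M →ₗ[R] N) (Submodule.map (h.symm : N →ₗ[R] M) CN) :=
          (map_equiv_eq h).symm
      _ ≤ Submodule.map (h : M →ₗ[R] N) CM := Submodule.map_mono h2
  exact ⟨Submodule.Quotient.equiv CM CN h (le_antisymm h1 h3)⟩


end General

section Ring

variable {A : Type} [Ring A]

/-- `A` is isomorphic to the regular right module. -/
def regEquiv (A : Type) [Ring A] : A ≃ₗ[Aᵐᵒᵖ] Aᵐᵒᵖ where
  toFun := op
  invFun := unop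
  left_inv := fun _ => rfl
  right_inv := fun _ => rfl
  map_add' := fun _ _ => rfl
  map_smul' := fun _ _ => rfl

lemma projA : Module.Projective Aᵐᵒᵖ A :=
  Module.Projective.of_equiv (regEquiv A).symm

/-- Any right-module endomorphism of `A` is left multiplication by its value at 1. -/
lemma endo_eq (h : A →ₗ[Aᵐᵒᵖ] A) (a : A) : h a = h 1 * a := by
  have h1 : (op a : Aᵐᵒᵖ) • (1 : A) = a := by rw [op_smul_eq_mul, one_mul]
  calc h a = h ((op a : Aᵐᵒᵖ) • (1 : A)) := by rw [h1]
    _ = (op a : Aᵐᵒᵖ) • h 1 := map_smul h _ _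
    _ = h 1 * a := op_smul_eq_mul _ _

lemma summand_projective {P Q : Submodule Aᵐᵒᵖ A} (h : IsCompl P Q) :
    Module.Projective Aᵐᵒᵖ ↥P := by
  haveI := projA (A := A)
  refine Module.Projective.of_split P.subtype (Submodule.projectionOnto P Q h) ?_
  ext x
  simp [Submodule.projectionOnto_apply_left h]

lemma summand_injective (hself : Module.Injective Aᵐᵒᵖ A) {P Q : Submodule Aᵐᵒᵖ A}
    (h : IsCompl P Q) : Module.Injective Aᵐᵒᵖ ↥P := by
  constructor
  intro X Y _ _ _ _ f hf g
  obtain ⟨h', hh'⟩ := hself.out f hf (P.subtype ∘ₗ g)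
  refine ⟨(Submodule.projectionOnto P Q h) ∘ₗ h', fun x => ?_⟩
  simp only [LinearMap.comp_apply, hh' x, Submodule.coe_subtype,
    Submodule.projectionOnto_apply_left h]

variable {A : Type} [Ring A]

lemma exists_decomp [IsArtinian Aᵐᵒᵖ A] (W : Submodule Aᵐᵒᵖ A) (hWc : ∃ Q, IsCompl W Q) :
    ∃ s : Finset (Submodule Aᵐᵒᵖ A), sSup (↑s : Set (Submodule Aᵐᵒᵖ A)) = W ∧
      ∀ P ∈ s, (∃ Q, IsCompl P Q) ∧ Indec Aᵐᵒᵖ ↥P := by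
  classical
  induction W using WellFoundedLT.induction with
  | _ W ih =>
  obtain ⟨Q, hQ⟩ := hWc
  by_cases hbot : W = ⊥
  · exact ⟨∅, by simp [hbot], by simp⟩
  by_cases hind : Indec Aᵐᵒᵖ ↥W
  · refine ⟨{W}, by simp, ?_⟩
    intro P hP
    rw [Finset.mem_singleton] at hP
    subst hP
    exact ⟨⟨Q, hQ⟩, hind⟩
  -- W is decomposable
  have hbot' : (⊥ : Submodule Aᵐᵒᵖ ↥W) ≠ ⊤ := by
    intro h
    apply hbot
    rw [eq_bot_iff]
    intro x hx
    have h1 : (⟨x, hx⟩ : ↥W) ∈ (⊤ : Submodule Aᵐᵒᵖ ↥W) := Submodule.mem_top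
    rw [← h, Submodule.mem_bot] at h1
    simpa using congrArg Subtype.val h1
  have hB : ¬ ∀ U V : Submodule Aᵐᵒᵖ ↥W, IsCompl U V → U = ⊥ ∨ V = ⊥ :=
    fun hall => hind ⟨hbot', hall⟩
  push_neg at hB
  obtain ⟨U', V', hUV', hU'0, hV'0⟩ := hB
  set U : Submodule Aᵐᵒᵖ A := Submodule.map W.subtype U' with hUdef
  set V : Submodule Aᵐᵒᵖ A := Submodule.map W.subtype V' with hVdef
  have hUle : U ≤ W := Submodule.map_subtype_le W U'
  have hVle : V ≤ W := Submodule.map_subtype_le W V'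
  have hsupUV : U ⊔ V = W := by
    rw [hUdef, hVdef, ← Submodule.map_sup, codisjoint_iff.mp hUV'.codisjoint,
      Submodule.map_subtype_top]
  have hinfUV : U ⊓ V = ⊥ := by
    rw [eq_bot_iff]
    rintro x ⟨⟨u', hu', hux⟩, ⟨v', hv', hvx⟩⟩
    have huv : u' = v' := Subtype.ext (hux.trans hvx.symm)
    have h1 : u' ∈ U' ⊓ V' := ⟨hu', huv ▸ hv'⟩
    rw [disjoint_iff.mp hUV'.disjoint, Submodule.mem_bot] at h1
    rw [Submodule.mem_bot, ← hux, h1]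
    rfl
  have hU0 : U ≠ ⊥ := by
    intro h
    apply hU'0
    rw [eq_bot_iff]
    intro u' hu'
    have h1 : (u' : A) ∈ U := ⟨u', hu', rfl⟩
    rw [h, Submodule.mem_bot] at h1
    rw [Submodule.mem_bot]
    exact Subtype.ext h1
  have hV0 : V ≠ ⊥ := by
    intro h
    apply hV'0
    rw [eq_bot_iff]
    intro v' hv'
    have h1 : (v' : A) ∈ V := ⟨v', hv', rfl⟩
    rw [h, Submodule.mem_bot] at h1
    rw [Submodule.mem_bot]
    exact Subtype.ext h1
  have hUlt : U < W := by
    rcases lt_or_eq_of_le hUle with h | h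
    · exact h
    · exfalso
      apply hV0
      have : V ≤ U := h ▸ hVle
      rw [eq_bot_iff, ← hinfUV]
      exact le_inf this le_rfl
  have hVlt : V < W := by
    rcases lt_or_eq_of_le hVle with h | h
    · exact h
    · exfalso
      apply hU0
      have : U ≤ V := h ▸ hUle
      rw [eq_bot_iff, ← hinfUV]
      exact le_inf le_rfl this
  have hQW : Q ⊓ W = ⊥ := by
    rw [inf_comm]
    exact disjoint_iff.mp hQ.disjoint
  have hcomplU : IsCompl U (V ⊔ Q) := by
    constructor
    · rw [disjoint_iff]
      have h1 : (V ⊔ Q) ⊓ W = V := by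
        rw [sup_inf_assoc_of_le Q hVle, hQW, sup_bot_eq]
      have h2 : U ⊓ (V ⊔ Q) = U ⊓ ((V ⊔ Q) ⊓ W) := by
        rw [inf_comm (V ⊔ Q) W, ← inf_assoc, inf_eq_left.mpr hUle]
      rw [h2, h1, hinfUV]
    · rw [codisjoint_iff, ← sup_assoc, hsupUV, codisjoint_iff.mp hQ.codisjoint]
  have hcomplV : IsCompl V (U ⊔ Q) := by
    constructor
    · rw [disjoint_iff]
      have h1 : (U ⊔ Q) ⊓ W = U := by
        rw [sup_inf_assoc_of_le Q hUle, hQW, sup_bot_eq]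
      have h2 : V ⊓ (U ⊔ Q) = V ⊓ ((U ⊔ Q) ⊓ W) := by
        rw [inf_comm (U ⊔ Q) W, ← inf_assoc, inf_eq_left.mpr hVle]
      rw [h2, h1, inf_comm, hinfUV]
    · rw [codisjoint_iff, ← sup_assoc, sup_comm V U, hsupUV, codisjoint_iff.mp hQ.codisjoint]
  obtain ⟨s₁, hs₁, hall₁⟩ := ih U hUlt ⟨V ⊔ Q, hcomplU⟩
  obtain ⟨s₂, hs₂, hall₂⟩ := ih V hVlt ⟨U ⊔ Q, hcomplV⟩
  refine ⟨s₁ ∪ s₂, ?_, ?_⟩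
  · rw [Finset.coe_union, sSup_union, hs₁, hs₂, hsupUV]
  · intro P hP
    rcases Finset.mem_union.mp hP with h | h
    · exact hall₁ P h
    · exact hall₂ P h


theorem kasch_exists [IsArtinian Aᵐᵒᵖ A] [IsNoetherian Aᵐᵒᵖ A]
    (hself : Module.Injective Aᵐᵒᵖ A)
    (C : Submodule Aᵐᵒᵖ A) (hC : C ≠ ⊤) :
    ∃ v : A, v ≠ 0 ∧ ∀ b ∈ C, v * b = 0 := by
  classical
  haveI : IsCoatomic (Submodule Aᵐᵒᵖ A) := isCoatomic_of_orderTop_gt_wellFounded IsWellFounded.wf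
  obtain ⟨Cm, hCm, hCCm⟩ := (eq_top_or_exists_le_coatom C).resolve_left hC
  have hSsimple : IsSimpleModule Aᵐᵒᵖ (A ⧸ Cm) := (isSimpleModule_iff_isCoatom).mpr hCm
  obtain ⟨s, hsSup, hall⟩ := exists_decomp (⊤ : Submodule Aᵐᵒᵖ A) ⟨⊥, isCompl_top_bot⟩
  set ι := {P : Submodule Aᵐᵒᵖ A // P ∈ s} with hι
  haveI : Finite ι := inferInstance
  have hind : ∀ i : ι, Indec Aᵐᵒᵖ ↥(i.1) := fun i => (hall i.1 i.2).2
  have hQ : ∀ i : ι, ∃ Q, IsCompl i.1 Q := fun i => (hall i.1 i.2).1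
  have hinj : ∀ i : ι, Module.Injective Aᵐᵒᵖ ↥(i.1) := fun i =>
    summand_injective hself (hQ i).choose_spec
  have hproj : ∀ i : ι, Module.Projective Aᵐᵒᵖ ↥(i.1) := fun i =>
    summand_projective (hQ i).choose_spec
  choose T hT0 hTmin using fun i : ι => unique_atom (hinj i) (hind i)
  choose Co hCo0 hComax using fun i : ι => unique_coatom (hproj i) (hind i)
  have hTatom : ∀ i : ι, IsAtom (T i) := by
    intro i
    refine ⟨hT0 i, fun b hb => ?_⟩
    by_contra hb0
    exact absurd (hTmin i b hb0) (not_le_of_gt hb)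
  have hTsimple : ∀ i : ι, IsSimpleModule Aᵐᵒᵖ ↥(T i) := fun i =>
    (isSimpleModule_iff_isAtom).mpr (hTatom i)
  -- every simple right module is the top of some indecomposable summand
  have main9 : ∀ (S : Type) [AddCommGroup S] [Module Aᵐᵒᵖ S], IsSimpleModule Aᵐᵒᵖ S →
      ∃ i : ι, Nonempty ((↥(i.1) ⧸ Co i) ≃ₗ[Aᵐᵒᵖ] S) := by
    intro S _ _ hS
    haveI := hS
    haveI : Nontrivial S := IsSimpleModule.nontrivial Aᵐᵒᵖ S
    obtain ⟨s₀, hs₀⟩ := exists_ne (0 : S)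
    set ψ : A →ₗ[Aᵐᵒᵖ] S :=
      { toFun := fun a => (op a : Aᵐᵒᵖ) • s₀
        map_add' := fun a b => by
          show (op (a + b) : Aᵐᵒᵖ) • s₀ = (op a : Aᵐᵒᵖ) • s₀ + (op b : Aᵐᵒᵖ) • s₀
          rw [op_add, add_smul]
        map_smul' := fun c a => by
          show (op (c • a) : Aᵐᵒᵖ) • s₀ = c • ((op a : Aᵐᵒᵖ) • s₀)
          rw [MulOpposite.smul_eq_mul_unop, op_mul, op_unop, mul_smul] } with hψdef
    have hψ1 : ψ 1 = s₀ := by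
      show (op (1 : A) : Aᵐᵒᵖ) • s₀ = s₀
      rw [op_one, one_smul]
    have hne : ∃ i : ι, ¬ (i.1 ≤ LinearMap.ker ψ) := by
      by_contra hallk
      push_neg at hallk
      have htop : (⊤ : Submodule Aᵐᵒᵖ A) ≤ LinearMap.ker ψ := by
        rw [← hsSup]
        refine sSup_le ?_
        rintro P hP
        exact hallk ⟨P, hP⟩
      have h1 : ψ 1 = 0 := htop Submodule.mem_top
      rw [hψ1] at h1
      exact hs₀ h1
    obtain ⟨i, hi⟩ := hne
    have hφne : ψ ∘ₗ (i.1).subtype ≠ 0 := by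
      intro h0
      apply hi
      intro x hx
      have := LinearMap.congr_fun h0 ⟨x, hx⟩
      simpa using this
    exact ⟨i, top_iso hS ⟨hCo0 i, hComax i⟩ (ψ ∘ₗ (i.1).subtype) hφne⟩
  choose τ hτ using fun i : ι => main9 (↥(T i)) (hTsimple i)
  -- well-definedness and injectivity on iso classes
  have hwd : ∀ i j : ι, Nonempty (↥(i.1) ≃ₗ[Aᵐᵒᵖ] ↥(j.1)) →
      Nonempty (↥((τ i).1) ≃ₗ[Aᵐᵒᵖ] ↥((τ j).1)) := by
    rintro i j ⟨e⟩
    obtain ⟨eT⟩ := atom_map e ⟨hT0 i, hTmin i⟩ ⟨hT0 j, hTmin j⟩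
    obtain ⟨f1⟩ := hτ i
    obtain ⟨f2⟩ := hτ j
    have etop : ((↥((τ i).1) ⧸ Co (τ i)) ≃ₗ[Aᵐᵒᵖ] (↥((τ j).1) ⧸ Co (τ j))) :=
      f1.trans (eT.trans f2.symm)
    exact iso_of_top_iso (hproj (τ i)) (hproj (τ j)) (hind (τ i)) (hind (τ j))
      ⟨hCo0 (τ i), hComax (τ i)⟩ ⟨hCo0 (τ j), hComax (τ j)⟩ etop
  have hback : ∀ i j : ι, Nonempty (↥((τ i).1) ≃ₗ[Aᵐᵒᵖ] ↥((τ j).1)) →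
      Nonempty (↥(i.1) ≃ₗ[Aᵐᵒᵖ] ↥(j.1)) := by
    rintro i j ⟨e⟩
    obtain ⟨etop⟩ := top_map e ⟨hCo0 (τ i), hComax (τ i)⟩ ⟨hCo0 (τ j), hComax (τ j)⟩
    obtain ⟨f1⟩ := hτ i
    obtain ⟨f2⟩ := hτ j
    have eT : ↥(T i) ≃ₗ[Aᵐᵒᵖ] ↥(T j) := f1.symm.trans (etop.trans f2)
    exact iso_of_atom_iso (hinj i) (hinj j) (hind i) (hind j)
      ⟨hT0 i, hTmin i⟩ ⟨hT0 j, hTmin j⟩ eT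
  -- pigeonhole on iso classes
  set st : Setoid ι :=
    ⟨fun i j => Nonempty (↥(i.1) ≃ₗ[Aᵐᵒᵖ] ↥(j.1)),
      ⟨fun i => ⟨LinearEquiv.refl _ _⟩, fun h => h.elim (fun e => ⟨e.symm⟩),
        fun h1 h2 => h1.elim (fun e => h2.elim (fun f => ⟨e.trans f⟩))⟩⟩ with hst
  haveI : Finite (Quotient st) := Quotient.finite st
  set τbar : Quotient st → Quotient st := Quotient.map τ hwd with hτbar
  have hinjτ : Function.Injective τbar := by
    intro q1 q2 h
    induction q1 using Quotient.ind with | _ i => ?_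
    induction q2 using Quotient.ind with | _ j => ?_
    have h2 : τ i ≈ τ j := by
      apply Quotient.exact
      simpa [hτbar, Quotient.map_mk] using h
    exact Quotient.sound (hback i j h2)
  have hsurjτ := (Finite.injective_iff_surjective).mp hinjτ
  -- realize the simple module A ⧸ Cm
  obtain ⟨i0, hNe0⟩ := main9 (A ⧸ Cm) hSsimple
  obtain ⟨e0⟩ := hNe0
  obtain ⟨q, hq⟩ := hsurjτ (Quotient.mk st i0)
  obtain ⟨j, rfl⟩ := Quotient.exists_rep q
  have h3 : τ j ≈ i0 := by
    apply Quotient.exact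
    simpa [hτbar, Quotient.map_mk] using hq
  obtain ⟨e1⟩ := h3
  obtain ⟨etop⟩ := top_map e1 ⟨hCo0 (τ j), hComax (τ j)⟩ ⟨hCo0 i0, hComax i0⟩
  obtain ⟨f1⟩ := hτ j
  have χ : (A ⧸ Cm) ≃ₗ[Aᵐᵒᵖ] ↥(T j) := e0.symm.trans (etop.symm.trans f1)
  set t : ↥(T j) := χ (Submodule.Quotient.mk 1) with ht
  set v : A := (((t : ↥(j.1)) : A)) with hv
  have hone : (1 : A) ∉ Cm := by
    intro h1
    apply hCm.1
    rw [eq_top_iff]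
    intro b _
    have hb1 : (op b : Aᵐᵒᵖ) • (1 : A) ∈ Cm := Cm.smul_mem _ h1
    rw [op_smul_eq_mul, one_mul] at hb1
    exact hb1
  have hmk1 : (Submodule.Quotient.mk 1 : A ⧸ Cm) ≠ 0 := by
    rw [Ne, Submodule.Quotient.mk_eq_zero]
    exact hone
  have hvne : v ≠ 0 := by
    intro h0
    apply hmk1
    apply χ.injective
    rw [map_zero, ← ht]
    apply Subtype.ext
    apply Subtype.ext
    exact h0
  refine ⟨v, hvne, fun b hb => ?_⟩
  have hbm : b ∈ Cm := hCCm hb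
  have h1 : (op b : Aᵐᵒᵖ) • (Submodule.Quotient.mk 1 : A ⧸ Cm) = 0 := by
    rw [← Submodule.Quotient.mk_smul, Submodule.Quotient.mk_eq_zero, op_smul_eq_mul, one_mul]
    exact hbm
  have h2 : (op b : Aᵐᵒᵖ) • t = 0 := by
    rw [ht, ← map_smul, h1, map_zero]
  have h3 : v * b = ((((op b : Aᵐᵒᵖ) • t : ↥(T j)) : ↥(j.1)) : A) := by
    rw [← op_smul_eq_mul]
    rfl
  rw [h3, h2]
  rfl

end Ring

end Stmt15

end Stmt15Aux

theorem stmt_15 (K A : Type) [Field K] [Ring A] [Algebra K A] [FiniteDimensional K A]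
    (hself : Module.Injective Aᵐᵒᵖ A)
    (I : TwoSidedIdeal A) (e : A) (he : e * e = e)
    (hres : ∀ a : A, a * e - a ∈ I ∧ e * a - a ∈ I)
    (hIeI : ∀ x ∈ I, ∀ y ∈ I, x * e * y = 0)
    (hl : {a : A | ∀ x ∈ I, a * x = 0} = {y : A | ∃ x ∈ I, y = x * e}) :
    {x : A | x = e * x * e ∧ ∀ y ∈ I, x * y = 0} = {z : A | ∃ y ∈ I, z = e * y * e} ∧
    {x : A | x = e * x * e ∧ ∀ y ∈ I, y * x = 0} = {z : A | ∃ y ∈ I, z = e * y * e} := by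
  have hez : ∀ y : A, e * (e * y * e) = e * y * e := by
    intro y
    calc e * (e * y * e) = (e * (e * y)) * e := (mul_assoc e (e * y) e).symm
      _ = ((e * e) * y) * e := by rw [← mul_assoc e e y]
      _ = e * y * e := by rw [he]
  have hze : ∀ y : A, (e * y * e) * e = e * y * e := by
    intro y
    calc (e * y * e) * e = (e * y) * (e * e) := mul_assoc (e * y) e e
      _ = e * y * e := by rw [he]
  constructor
  · ext x
    simp only [Set.mem_setOf_eq]
    constructor
    · rintro ⟨hx1, hx2⟩
      have hx : x ∈ {a : A | ∀ y ∈ I, a * y = 0} := hx2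
      rw [hl] at hx
      obtain ⟨w, hw, hxw⟩ := hx
      refine ⟨w, hw, ?_⟩
      calc x = e * x * e := hx1
        _ = e * (w * e) * e := by rw [← hxw]
        _ = ((e * w) * e) * e := by rw [← mul_assoc e w e]
        _ = (e * w) * (e * e) := mul_assoc (e * w) e e
        _ = e * w * e := by rw [he]
    · rintro ⟨y, hy, rfl⟩
      refine ⟨?_, ?_⟩
      · rw [hez y, hze y]
      · intro w hw
        have h0 : y * e * w = 0 := hIeI y hy w hw
        calc (e * y * e) * w = (e * (y * e)) * w := by rw [mul_assoc e y e]
          _ = e * ((y * e) * w) := mul_assoc e (y * e) w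
          _ = 0 := by rw [show (y * e) * w = 0 from h0, mul_zero]
  · ext x
    simp only [Set.mem_setOf_eq]
    constructor
    · rintro ⟨hx1, hx2⟩
      haveI hart : IsArtinian Aᵐᵒᵖ A := isArtinian_of_tower K inferInstance
      haveI hnoe : IsNoetherian Aᵐᵒᵖ A := isNoetherian_of_tower K inferInstance
      have hex : e * x = x := by
        calc e * x = e * (e * x * e) := by rw [← hx1]
          _ = e * x * e := hez x
          _ = x := hx1.symm
      have hxI : x ∈ I := by
        by_contra hxI
        set Isub : Submodule Aᵐᵒᵖ A :=
          { carrier := {a : A | a ∈ I}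
            add_mem' := fun ha hb => I.add_mem ha hb
            zero_mem' := I.zero_mem
            smul_mem' := fun c a ha => by
              show a * c.unop ∈ I
              exact I.mul_mem_right a c.unop ha } with hIsub
        have hIsubmem : ∀ a : A, a ∈ Isub ↔ a ∈ I := fun a => Iff.rfl
        set Csub : Submodule Aᵐᵒᵖ A :=
          { carrier := {b : A | x * b ∈ I}
            add_mem' := fun {a b} ha hb => by
              show x * (a + b) ∈ I
              rw [mul_add]
              exact I.add_mem ha hb
            zero_mem' := by
              show x * 0 ∈ I
              rw [mul_zero]
              exact I.zero_mem
            smul_mem' := fun c b hb => by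
              show x * (b * c.unop) ∈ I
              rw [← mul_assoc]
              exact I.mul_mem_right _ c.unop hb } with hCsub
        have hCtop : Csub ≠ ⊤ := by
          intro h
          apply hxI
          have h1 : (1 : A) ∈ Csub := h ▸ Submodule.mem_top
          have h2 : x * 1 ∈ I := h1
          rwa [mul_one] at h2
        obtain ⟨v, hv0, hvC⟩ := Stmt15.kasch_exists hself Csub hCtop
        set lx : A →ₗ[Aᵐᵒᵖ] A :=
          { toFun := fun a => x * a
            map_add' := fun a b => mul_add x a b
            map_smul' := fun c a => by
              show x * (a * c.unop) = (x * a) * c.unop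
              rw [mul_assoc] } with hlx
        set lv : A →ₗ[Aᵐᵒᵖ] A :=
          { toFun := fun a => v * a
            map_add' := fun a b => mul_add v a b
            map_smul' := fun c a => by
              show v * (a * c.unop) = (v * a) * c.unop
              rw [mul_assoc] } with hlv
        have hCker : Csub ≤ LinearMap.ker (Isub.mkQ ∘ₗ lx) := by
          intro b hb
          simp only [LinearMap.mem_ker, LinearMap.comp_apply, Submodule.mkQ_apply]
          rw [Submodule.Quotient.mk_eq_zero]
          exact hb
        set α : (A ⧸ Csub) →ₗ[Aᵐᵒᵖ] (A ⧸ Isub) := Submodule.liftQ Csub (Isub.mkQ ∘ₗ lx) hCker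
          with hα
        have hαinj : Function.Injective α := by
          rw [← LinearMap.ker_eq_bot]
          apply Submodule.ker_liftQ_eq_bot
          intro b hb
          simp only [LinearMap.mem_ker, LinearMap.comp_apply, Submodule.mkQ_apply,
            Submodule.Quotient.mk_eq_zero] at hb
          exact hb
        have hvker : Csub ≤ LinearMap.ker lv := by
          intro b hb
          simp only [LinearMap.mem_ker]
          exact hvC b hb
        set β : (A ⧸ Csub) →ₗ[Aᵐᵒᵖ] A := Submodule.liftQ Csub lv hvker with hβ
        haveI := hself
        obtain ⟨h, hh⟩ :=
          Module.Injective.extension_property Aᵐᵒᵖ A (A ⧸ Csub) (A ⧸ Isub) α hαinj β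
        set H : A →ₗ[Aᵐᵒᵖ] A := h ∘ₗ Isub.mkQ with hH
        set c : A := H 1 with hc
        have hcy : ∀ y ∈ I, c * y = 0 := by
          intro y hy
          have h1 : H y = c * y := Stmt15.endo_eq H y
          have h2 : H y = 0 := by
            show h (Isub.mkQ y) = 0
            rw [Submodule.mkQ_apply, (Submodule.Quotient.mk_eq_zero Isub).mpr hy, map_zero]
          rw [← h1, h2]
        obtain ⟨u, hu, hcu⟩ : ∃ u ∈ I, c = u * e := by
          have hmem : c ∈ {a : A | ∀ y ∈ I, a * y = 0} := hcy
          rw [hl] at hmem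
          exact hmem
        have hv : v = c * x := by
          have e1 : β (Submodule.Quotient.mk 1) = v := by
            rw [hβ, Submodule.liftQ_apply]
            show v * 1 = v
            rw [mul_one]
          have e2 : α (Submodule.Quotient.mk 1) = Isub.mkQ x := by
            rw [hα, Submodule.liftQ_apply]
            simp only [LinearMap.comp_apply]
            show Isub.mkQ (x * 1) = Isub.mkQ x
            rw [mul_one]
          have e3 : h (α (Submodule.Quotient.mk 1)) = β (Submodule.Quotient.mk 1) := by
            have := LinearMap.congr_fun hh (Submodule.Quotient.mk 1)
            simpa using this
          calc v = β (Submodule.Quotient.mk 1) := e1.symm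
            _ = h (α (Submodule.Quotient.mk 1)) := e3.symm
            _ = h (Isub.mkQ x) := by rw [e2]
            _ = H x := rfl
            _ = c * x := Stmt15.endo_eq H x
        have hv00 : v = 0 := by
          rw [hv, hcu, mul_assoc, hex]
          exact hx2 u hu
        exact hv0 hv00
      exact ⟨x, hxI, hx1⟩
    · rintro ⟨y, hy, rfl⟩
      refine ⟨?_, ?_⟩
      · rw [hez y, hze y]
      · intro w hw
        have h0 : w * e * y = 0 := hIeI w hw y hy
        calc w * (e * y * e) = w * (e * (y * e)) := by rw [mul_assoc e y e]
          _ = (w * e) * (y * e) := (mul_assoc w e (y * e)).symm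
          _ = ((w * e) * y) * e := (mul_assoc (w * e) y e).symm
          _ = 0 := by rw [show (w * e) * y = 0 from h0, zero_mul]
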